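/- Let n ≥ 1, ξ ∈ ℂ with ξⁿ = 1, f, g ∈ ℂ[x,y], and τ ∈ ℂ[X]. Let D_n be the derivation of ℂ[x,y] with D_n(x) = f(xⁿ,y) and D_n(y) = n·x^(n-1)·g(xⁿ,y), let π be the ℂ-algebra automorphism with π(x) = x, π(y) = y + τ(x), and set D_G := π⁻¹ ∘ D_n ∘ π. Let ρ be the ℂ-algebra automorphism with ρ(x) = ξ·x and ρ(y) = y + τ(ξ·x) − τ(x). Then ρ ∘ D_G ∘ ρ⁻¹ = ξ⁻¹ • D_G; in particular ρ preserves the foliation defined by D_G. -/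

import Mathlib

open MvPolynomial

/-- The polynomial ring `ℂ[x,y]`. -/
abbrev Rxy : Type := MvPolynomial (Fin 2) ℂ

/-- Any `ℂ`-algebra equivalence of `Rxy` fixes constants. -/
lemma algEquiv_C_fix (e : Rxy ≃ₐ[ℂ] Rxy) (c : ℂ) : e (C c) = C c := by
  rw [← MvPolynomial.algebraMap_eq]; exact e.commutes c

/-- Algebra equivalences commute with bivariate evaluation. -/
lemma algEquiv_aeval2 (e : Rxy ≃ₐ[ℂ] Rxy) (a b p : Rxy) :
    e (aeval ![a, b] p) = aeval ![e a, e b] p := by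
  have h := MvPolynomial.comp_aeval_apply (f := ![a, b]) (e : Rxy →ₐ[ℂ] Rxy) p
  have hv : (fun i => (e : Rxy →ₐ[ℂ] Rxy) (![a, b] i)) = ![e a, e b] := by
    funext i; fin_cases i <;> simp
  rw [hv] at h
  exact h

/-- Algebra equivalences commute with univariate evaluation. -/
lemma algEquiv_polyAeval (e : Rxy ≃ₐ[ℂ] Rxy) (a : Rxy) (τ : Polynomial ℂ) :
    e (Polynomial.aeval a τ) = Polynomial.aeval (e a) τ :=
  (Polynomial.aeval_algHom_apply e a τ).symm

/-- Conjugation of a derivation by an algebra equivalence. -/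
noncomputable def conjDer (e : Rxy ≃ₐ[ℂ] Rxy) (D : Derivation ℂ Rxy Rxy) : Derivation ℂ Rxy Rxy :=
  Derivation.mk' (e.symm.toLinearMap ∘ₗ D.toLinearMap ∘ₗ e.toLinearMap) (by
    intro a b
    simp [Derivation.leibniz, smul_eq_mul, map_add, map_mul])

@[simp] lemma conjDer_apply (e : Rxy ≃ₐ[ℂ] Rxy) (D : Derivation ℂ Rxy Rxy) (a : Rxy) :
    conjDer e D a = e.symm (D (e a)) := rfl

/-- Let `D_n = f(xⁿ,y) ∂x + n x^(n-1) g(xⁿ,y) ∂y`, `π : x ↦ x, y ↦ y + τ(x)`,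
`D_G = π⁻¹ ∘ D_n ∘ π`, and `ρ : x ↦ ξx, y ↦ y + τ(ξx) − τ(x)` with `ξⁿ = 1`.
Then `ρ ∘ D_G ∘ ρ⁻¹ = ξ⁻¹ • D_G`: `ρ` preserves the foliation defined by `D_G`. -/
theorem gamma_preserves_conjugated_pullback (n : ℕ) (hn : 1 ≤ n) (ξ : ℂ) (hξ : ξ ^ n = 1)
    (f g : Rxy) (τ : Polynomial ℂ)
    (Dn : Derivation ℂ Rxy Rxy)
    (hDnx : Dn (X 0) = aeval ![(X 0 : Rxy) ^ n, X 1] f)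
    (hDny : Dn (X 1) = (n : Rxy) * X 0 ^ (n - 1) * aeval ![(X 0 : Rxy) ^ n, X 1] g)
    (π : Rxy ≃ₐ[ℂ] Rxy) (hπx : π (X 0) = X 0)
    (hπy : π (X 1) = X 1 + Polynomial.aeval (X 0 : Rxy) τ)
    (ρ : Rxy ≃ₐ[ℂ] Rxy) (hρx : ρ (X 0) = C ξ * X 0)
    (hρy : ρ (X 1) = X 1 + Polynomial.aeval (C ξ * X 0 : Rxy) τ
      - Polynomial.aeval (X 0 : Rxy) τ) :
    ∀ a : Rxy, ρ (π.symm (Dn (π (ρ.symm a)))) = ξ⁻¹ • π.symm (Dn (π a)) := by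
  have hξ0 : ξ ≠ 0 := by
    rintro rfl
    rw [zero_pow (by omega)] at hξ
    exact zero_ne_one hξ
  have hξpow : ξ ^ (n - 1) = ξ⁻¹ := by
    refine eq_inv_of_mul_eq_one_left ?_
    rw [← pow_succ, Nat.sub_add_cancel hn, hξ]
  -- inverse values
  have hρCinvX : ρ (C ξ⁻¹ * X 0) = X 0 := by
    rw [map_mul, algEquiv_C_fix, hρx, ← mul_assoc, ← C_mul, inv_mul_cancel₀ hξ0, C_1, one_mul]
  have hρsx : ρ.symm (X 0) = C ξ⁻¹ * X 0 := by
    rw [AlgEquiv.symm_apply_eq, hρCinvX]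
  have hρsy : ρ.symm (X 1)
      = X 1 + Polynomial.aeval (C ξ⁻¹ * X 0 : Rxy) τ - Polynomial.aeval (X 0 : Rxy) τ := by
    rw [AlgEquiv.symm_apply_eq, map_sub, map_add, hρy, algEquiv_polyAeval, algEquiv_polyAeval,
      hρCinvX, hρx]
    ring
  have hπsx : π.symm (X 0) = X 0 := by
    rw [AlgEquiv.symm_apply_eq, hπx]
  have hπsy : π.symm (X 1) = X 1 - Polynomial.aeval (X 0 : Rxy) τ := by
    rw [AlgEquiv.symm_apply_eq, map_sub, hπy, algEquiv_polyAeval, hπx]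
    ring
  set σ : Rxy ≃ₐ[ℂ] Rxy := ρ.symm.trans π with hσ
  have hσap : ∀ a, σ a = π (ρ.symm a) := fun a => rfl
  have hσsap : ∀ a, σ.symm a = ρ (π.symm a) := by
    intro a
    rw [hσ, AlgEquiv.symm_trans_apply, AlgEquiv.symm_symm]
  -- values of σ and σ.symm
  have hσx : σ (X 0) = C ξ⁻¹ * X 0 := by
    rw [hσap, hρsx, map_mul, algEquiv_C_fix, hπx]
  have hσy : σ (X 1) = X 1 + Polynomial.aeval (C ξ⁻¹ * X 0 : Rxy) τ := by
    rw [hσap, hρsy, map_sub, map_add, hπy, algEquiv_polyAeval, algEquiv_polyAeval,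
      map_mul, algEquiv_C_fix, hπx]
    ring
  have hσsx : σ.symm (X 0) = C ξ * X 0 := by
    rw [hσsap, hπsx, hρx]
  have hσsy : σ.symm (X 1) = X 1 - Polynomial.aeval (X 0 : Rxy) τ := by
    rw [hσsap, hπsy, map_sub, hρy, algEquiv_polyAeval, hρx]
    ring
  have hσsxn : σ.symm ((X 0 : Rxy) ^ n) = X 0 ^ n := by
    rw [map_pow, hσsx, mul_pow, ← C_pow, hξ, C_1, one_mul]
  have hπsxn : π.symm ((X 0 : Rxy) ^ n) = X 0 ^ n := by
    rw [map_pow, hπsx]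
  have hσsCinvX : σ.symm (C ξ⁻¹ * X 0) = X 0 := by
    rw [map_mul, algEquiv_C_fix, hσsx, ← mul_assoc, ← C_mul, inv_mul_cancel₀ hξ0, C_1, one_mul]
  have hDnCX : Dn (C ξ⁻¹ * X 0) = C ξ⁻¹ * aeval ![(X 0 : Rxy) ^ n, X 1] f := by
    rw [show (C ξ⁻¹ * X 0 : Rxy) = ξ⁻¹ • X 0 from (smul_eq_C_mul _ _).symm, Dn.map_smul,
      hDnx, smul_eq_C_mul]
  have h1 : (C ξ * X 0 : Rxy) ^ n = X 0 ^ n := by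
    rw [mul_pow, ← C_pow, hξ, C_1, one_mul]
  have h2 : (C ξ * X 0 : Rxy) ^ (n - 1) = C ξ⁻¹ * X 0 ^ (n - 1) := by
    rw [mul_pow, ← C_pow, hξpow]
  have h3 : (C ξ⁻¹ * (C ξ * X 0) : Rxy) = X 0 := by
    rw [← mul_assoc, ← C_mul, inv_mul_cancel₀ hξ0, C_1, one_mul]
  -- key derivation identity
  have key : conjDer σ Dn = ξ⁻¹ • conjDer π Dn := by
    apply MvPolynomial.derivation_ext
    intro i
    fin_cases i
    · show σ.symm (Dn (σ (X 0))) = ξ⁻¹ • π.symm (Dn (π (X 0)))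
      rw [hσx, hπx, hDnCX, hDnx]
      simp only [map_mul, map_pow, algEquiv_C_fix, algEquiv_aeval2, hσsx, hσsy, hπsx, hπsy]
      rw [h1, smul_eq_C_mul]
    · show σ.symm (Dn (σ (X 1))) = ξ⁻¹ • π.symm (Dn (π (X 1)))
      have hDσy : Dn (σ (X 1)) = (n : Rxy) * X 0 ^ (n - 1) * aeval ![(X 0 : Rxy) ^ n, X 1] g
          + Polynomial.aeval (C ξ⁻¹ * X 0 : Rxy) (Polynomial.derivative τ)
            * (C ξ⁻¹ * aeval ![(X 0 : Rxy) ^ n, X 1] f) := by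
        rw [hσy, map_add, hDny, Dn.map_aeval, hDnCX, smul_eq_mul]
      have hDπy : Dn (π (X 1)) = (n : Rxy) * X 0 ^ (n - 1) * aeval ![(X 0 : Rxy) ^ n, X 1] g
          + Polynomial.aeval (X 0 : Rxy) (Polynomial.derivative τ)
            * aeval ![(X 0 : Rxy) ^ n, X 1] f := by
        rw [hπy, map_add, hDny, Dn.map_aeval, hDnx, smul_eq_mul]
      rw [hDσy, hDπy]
      simp only [map_add, map_mul, map_pow, map_natCast, algEquiv_aeval2, algEquiv_polyAeval,
        algEquiv_C_fix, hσsx, hσsy, hπsx, hπsy]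
      rw [h1, h2, h3, smul_add, smul_eq_C_mul, smul_eq_C_mul]
      ring
  intro a
  have h := DFunLike.congr_fun key a
  rw [conjDer_apply, Derivation.coe_smul, Pi.smul_apply, conjDer_apply, hσap, hσsap] at h
  exact h
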